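/- Trust region optimality characterization: Let H, M be symmetric PSD matrices with μM ⪯ H ⪯ LM for some 0 < μ ≤ L (so they share a kernel), let g ∈ Im(M), and r > 0. Then there exists λ ≥ 0 such that x_Q = (H + λM)† g is a minimizer of Q(x) = −gᵀx + (1/2)xᵀHx over the ball {x : ‖x‖_M ≤ r}, this λ is unique, and if λ > 0 then ‖x_Q‖_M = r. -/

import Mathlib

open Matrix

/-- The four Moore–Penrose conditions characterizing the pseudoinverse. -/
def IsMoorePenrose {d : ℕ} (A B : Matrix (Fin d) (Fin d) ℝ) : Prop :=
  A * B * A = A ∧ B * A * B = B ∧ (A * B)ᵀ = A * B ∧ (B * A)ᵀ = B * A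


lemma exists_proj {d : ℕ} (M : Matrix (Fin d) (Fin d) ℝ) (hM : M.PosSemidef) :
    ∃ Pi0 : Matrix (Fin d) (Fin d) ℝ, Pi0ᵀ = Pi0 ∧ Pi0 * Pi0 = Pi0 ∧ M * Pi0 = 0 ∧
      (∀ x, M *ᵥ x = 0 → Pi0 *ᵥ x = x) := by
  have hMh : M.IsHermitian := hM.1
  set U : Matrix (Fin d) (Fin d) ℝ := (hMh.eigenvectorUnitary : Matrix (Fin d) (Fin d) ℝ) with hU
  have hUU : U * star U = 1 := Matrix.mem_unitaryGroup_iff.mp hMh.eigenvectorUnitary.2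
  have hUU' : star U * U = 1 := Matrix.mem_unitaryGroup_iff'.mp hMh.eigenvectorUnitary.2
  set v : Fin d → ℝ := hMh.eigenvalues with hv
  have hspec : M = U * diagonal v * star U := by
    have := hMh.spectral_theorem
    rwa [RCLike.ofReal_real_eq_id, Function.id_comp] at this
  set D : Matrix (Fin d) (Fin d) ℝ := diagonal (fun i => if v i = 0 then (1:ℝ) else 0) with hD
  have hstar : star U = Uᵀ := by
    rw [Matrix.star_eq_conjTranspose, Matrix.conjTranspose_eq_transpose_of_trivial]
  have hDD : D * D = D := by
    have h1 : (fun i => (if v i = 0 then (1:ℝ) else 0) * if v i = 0 then (1:ℝ) else 0)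
        = fun i => if v i = 0 then (1:ℝ) else 0 := by
      funext i; by_cases h : v i = 0 <;> simp [h]
    rw [hD, diagonal_mul_diagonal, h1]
  have hvD : diagonal v * D = 0 := by
    have h1 : (fun i => v i * if v i = 0 then (1:ℝ) else 0) = fun _ => (0:ℝ) := by
      funext i; by_cases h : v i = 0 <;> simp [h]
    rw [hD, diagonal_mul_diagonal, h1, diagonal_zero]
  refine ⟨U * D * star U, ?_, ?_, ?_, ?_⟩
  · rw [hstar, Matrix.transpose_mul, Matrix.transpose_mul, Matrix.transpose_transpose, hD,
      diagonal_transpose, Matrix.mul_assoc]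
  · simp only [Matrix.mul_assoc]
    rw [← Matrix.mul_assoc (star U) U, hUU', Matrix.one_mul, ← Matrix.mul_assoc D D, hDD]
  · rw [hspec]
    simp only [Matrix.mul_assoc]
    rw [← Matrix.mul_assoc (star U) U, hUU', Matrix.one_mul,
      ← Matrix.mul_assoc (diagonal v) D, hvD]
    simp
  · intro x hx
    have hy : diagonal v *ᵥ (star U *ᵥ x) = 0 := by
      have h2 : star U *ᵥ (M *ᵥ x) = 0 := by rw [hx, mulVec_zero]
      rw [hspec] at h2
      rw [← h2, mulVec_mulVec, mulVec_mulVec, ← Matrix.mul_assoc, ← Matrix.mul_assoc, hUU',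
        Matrix.one_mul]
    have hDy : D *ᵥ (star U *ᵥ x) = star U *ᵥ x := by
      funext i
      have h3 := congrFun hy i
      simp only [mulVec_diagonal, hD] at h3 ⊢
      by_cases h : v i = 0
      · simp [h]
      · simp [h, (mul_eq_zero.mp h3).resolve_left h]
    calc (U * D * star U) *ᵥ x = U *ᵥ (D *ᵥ (star U *ᵥ x)) := by
          simp [← mulVec_mulVec, Matrix.mul_assoc]
      _ = U *ᵥ (star U *ᵥ x) := by rw [hDy]
      _ = x := by rw [mulVec_mulVec, hUU, one_mulVec]


lemma dot_symm {d : ℕ} (N : Matrix (Fin d) (Fin d) ℝ) (hN : Nᵀ = N) (x y : Fin d → ℝ) :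
    x ⬝ᵥ N *ᵥ y = y ⬝ᵥ N *ᵥ x := by
  rw [dotProduct_mulVec, ← mulVec_transpose, hN, dotProduct_comm]

lemma cs_ineq {d : ℕ} {M : Matrix (Fin d) (Fin d) ℝ} (hM : M.PosSemidef) (x y : Fin d → ℝ) :
    (x ⬝ᵥ M *ᵥ y)^2 ≤ (x ⬝ᵥ M *ᵥ x) * (y ⬝ᵥ M *ᵥ y) := by
  obtain ⟨B, rfl⟩ : ∃ B : Matrix (Fin d) (Fin d) ℝ, M = Bᴴ * B := by
    open scoped MatrixOrder in
    obtain ⟨B, hB⟩ := CStarAlgebra.nonneg_iff_eq_star_mul_self.mp hM.nonneg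
    exact ⟨B, hB⟩
  have key : ∀ u v : Fin d → ℝ, u ⬝ᵥ (Bᴴ * B) *ᵥ v = (B *ᵥ u) ⬝ᵥ (B *ᵥ v) := by
    intro u v
    rw [← mulVec_mulVec, dotProduct_mulVec, ← mulVec_transpose,
      Matrix.conjTranspose_eq_transpose_of_trivial, Matrix.transpose_transpose]
  rw [key, key, key]
  have := Finset.sum_mul_sq_le_sq_mul_sq Finset.univ (B *ᵥ x) (B *ᵥ y)
  simpa [dotProduct, pow_two, Finset.mul_sum, Finset.sum_mul, mul_comm, mul_left_comm] using this

lemma sqrt_le_iff'' {a r : ℝ} (ha : 0 ≤ a) (hr : 0 ≤ r) : Real.sqrt a ≤ r ↔ a ≤ r^2 := by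
  constructor
  · intro h; nlinarith [Real.sq_sqrt ha, Real.sqrt_nonneg a]
  · intro h; exact (Real.sqrt_le_sqrt h).trans_eq (Real.sqrt_sq hr)

lemma sqrt_eq_iff'' {a r : ℝ} (ha : 0 ≤ a) (hr : 0 ≤ r) : Real.sqrt a = r ↔ a = r^2 := by
  constructor
  · intro h; rw [← h]; exact (Real.sq_sqrt ha).symm
  · intro h; rw [h, Real.sqrt_sq hr]

lemma quad_exp {d : ℕ} (N : Matrix (Fin d) (Fin d) ℝ) (hN : Nᵀ = N) (x y g : Fin d → ℝ)
    (hx : N *ᵥ x = g) :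
    (y - x) ⬝ᵥ N *ᵥ (y - x) = y ⬝ᵥ N *ᵥ y - 2*(g ⬝ᵥ y) + g ⬝ᵥ x := by
  have h1 : x ⬝ᵥ N *ᵥ y = g ⬝ᵥ y := by
    rw [dot_symm N hN x y, hx, dotProduct_comm]
  have h2 : y ⬝ᵥ N *ᵥ x = g ⬝ᵥ y := by rw [hx, dotProduct_comm]
  have h3 : x ⬝ᵥ N *ᵥ x = g ⬝ᵥ x := by rw [hx, dotProduct_comm]
  rw [mulVec_sub, dotProduct_sub, sub_dotProduct, sub_dotProduct, h1, h2, h3]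
  ring

lemma pinv_facts {d : ℕ} (N Pi0 : Matrix (Fin d) (Fin d) ℝ)
    (hNs : Nᵀ = N) (hPs : Pi0ᵀ = Pi0) (hPP : Pi0 * Pi0 = Pi0) (hNP : N * Pi0 = 0)
    (hdet : IsUnit (N + Pi0).det) :
    N * (N + Pi0)⁻¹ = 1 - Pi0 ∧ (N + Pi0)⁻¹ * N = 1 - Pi0 ∧
      Pi0 * (N + Pi0)⁻¹ = Pi0 ∧ (N + Pi0)⁻¹ * Pi0 = Pi0 ∧
      IsMoorePenrose N ((N + Pi0)⁻¹ - Pi0) := by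
  set B := (N + Pi0)⁻¹ with hB
  have hPN : Pi0 * N = 0 := by
    have h := congrArg Matrix.transpose hNP
    rwa [Matrix.transpose_mul, hNs, hPs, Matrix.transpose_zero] at h
  have hKB : (N + Pi0) * B = 1 := Matrix.mul_nonsing_inv _ hdet
  have hBK : B * (N + Pi0) = 1 := Matrix.nonsing_inv_mul _ hdet
  have hBP : B * Pi0 = Pi0 := by
    have hKP : (N + Pi0) * Pi0 = Pi0 := by rw [Matrix.add_mul, hNP, hPP, zero_add]
    calc B * Pi0 = B * ((N + Pi0) * Pi0) := by rw [hKP]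
      _ = (B * (N + Pi0)) * Pi0 := by rw [Matrix.mul_assoc]
      _ = Pi0 := by rw [hBK, Matrix.one_mul]
  have hBs : Bᵀ = B := by
    rw [hB, Matrix.transpose_nonsing_inv]
    congr 1
    rw [Matrix.transpose_add, hNs, hPs]
  have hPB : Pi0 * B = Pi0 := by
    have h := congrArg Matrix.transpose hBP
    rwa [Matrix.transpose_mul, hBs, hPs] at h
  have hNB : N * B = 1 - Pi0 := by
    have h := hKB
    rw [Matrix.add_mul, hPB] at h
    exact eq_sub_of_add_eq h
  have hBN : B * N = 1 - Pi0 := by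
    have h := hBK
    rw [Matrix.mul_add, hBP] at h
    exact eq_sub_of_add_eq h
  have hNPm : N * (B - Pi0) = 1 - Pi0 := by rw [Matrix.mul_sub, hNB, hNP, sub_zero]
  have hPNm : (B - Pi0) * N = 1 - Pi0 := by rw [Matrix.sub_mul, hBN, hPN, sub_zero]
  have hPiP : Pi0 * (B - Pi0) = 0 := by rw [Matrix.mul_sub, hPB, hPP, sub_self]
  refine ⟨hNB, hBN, hPB, hBP, ?_, ?_, ?_, ?_⟩
  · rw [hNPm, Matrix.sub_mul, Matrix.one_mul, hPN, sub_zero]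
  · rw [hPNm, Matrix.sub_mul, Matrix.one_mul, hPiP, sub_zero]
  · rw [hNPm]; rw [Matrix.transpose_sub, Matrix.transpose_one, hPs]
  · rw [hPNm, Matrix.transpose_sub, Matrix.transpose_one, hPs]

set_option maxHeartbeats 2000000 in
/-- Trust region optimality characterization: `x_Q = (H + λM)† g` minimizes
`Q(x) = -gᵀx + ½ xᵀHx` over `{x : ‖x‖_M ≤ r}` for a unique `λ ≥ 0`, and if `λ > 0`
then `‖x_Q‖_M = r`. -/
theorem stmt10 {d : ℕ} (H M : Matrix (Fin d) (Fin d) ℝ)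
    (hH : H.PosSemidef) (hM : M.PosSemidef)
    (μ L : ℝ) (hμ : 0 < μ) (hμL : μ ≤ L)
    (hlow : (H - μ • M).PosSemidef) (hup : (L • M - H).PosSemidef)
    (g : Fin d → ℝ) (hg : g ∈ Set.range M.mulVec) (r : ℝ) (hr : 0 < r) :
    ∃ lam : ℝ, ∃ P : Matrix (Fin d) (Fin d) ℝ,
      0 ≤ lam ∧ IsMoorePenrose (H + lam • M) P ∧
      (Real.sqrt (P.mulVec g ⬝ᵥ M.mulVec (P.mulVec g)) ≤ r ∧
        ∀ x : Fin d → ℝ, Real.sqrt (x ⬝ᵥ M.mulVec x) ≤ r →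
          -(g ⬝ᵥ P.mulVec g) + (1 / 2) * (P.mulVec g ⬝ᵥ H.mulVec (P.mulVec g))
            ≤ -(g ⬝ᵥ x) + (1 / 2) * (x ⬝ᵥ H.mulVec x)) ∧
      (0 < lam → Real.sqrt (P.mulVec g ⬝ᵥ M.mulVec (P.mulVec g)) = r) ∧
      (∀ lam' : ℝ, ∀ P' : Matrix (Fin d) (Fin d) ℝ,
        0 ≤ lam' → IsMoorePenrose (H + lam' • M) P' →
        (Real.sqrt (P'.mulVec g ⬝ᵥ M.mulVec (P'.mulVec g)) ≤ r ∧
          ∀ x : Fin d → ℝ, Real.sqrt (x ⬝ᵥ M.mulVec x) ≤ r →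
            -(g ⬝ᵥ P'.mulVec g) + (1 / 2) * (P'.mulVec g ⬝ᵥ H.mulVec (P'.mulVec g))
              ≤ -(g ⬝ᵥ x) + (1 / 2) * (x ⬝ᵥ H.mulVec x)) →
        (0 < lam' → Real.sqrt (P'.mulVec g ⬝ᵥ M.mulVec (P'.mulVec g)) = r) →
        lam' = lam) := by
  
  obtain ⟨w, hw⟩ := hg
  obtain ⟨Pi0, hPs, hPP, hMPi, hker⟩ := exists_proj M hM
  have hstarv : ∀ x : Fin d → ℝ, star x = x := fun x => by simp
  have hMs : Mᵀ = M := by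
    have := hM.1; rwa [Matrix.IsHermitian, Matrix.conjTranspose_eq_transpose_of_trivial] at this
  have hHs : Hᵀ = H := by
    have := hH.1; rwa [Matrix.IsHermitian, Matrix.conjTranspose_eq_transpose_of_trivial] at this
  have hMpsd : ∀ x, 0 ≤ x ⬝ᵥ M *ᵥ x := fun x => by have := hM.dotProduct_mulVec_nonneg x; rwa [hstarv] at this
  have hHpsd : ∀ x, 0 ≤ x ⬝ᵥ H *ᵥ x := fun x => by have := hH.dotProduct_mulVec_nonneg x; rwa [hstarv] at this
  have hlow' : ∀ x, μ * (x ⬝ᵥ M *ᵥ x) ≤ x ⬝ᵥ H *ᵥ x := by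
    intro x
    have h := hlow.dotProduct_mulVec_nonneg x
    rw [hstarv, Matrix.sub_mulVec, dotProduct_sub, Matrix.smul_mulVec, dotProduct_smul,
      smul_eq_mul] at h
    linarith
  have hup' : ∀ x, x ⬝ᵥ H *ᵥ x ≤ L * (x ⬝ᵥ M *ᵥ x) := by
    intro x
    have h := hup.dotProduct_mulVec_nonneg x
    rw [hstarv, Matrix.sub_mulVec, dotProduct_sub, Matrix.smul_mulVec, dotProduct_smul,
      smul_eq_mul] at h
    linarith
  have hMzero : ∀ x, x ⬝ᵥ M *ᵥ x = 0 → M *ᵥ x = 0 := by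
    intro x hx
    exact (hM.dotProduct_mulVec_zero_iff x).mp (by rwa [hstarv])
  have hkerH : ∀ x, M *ᵥ x = 0 → H *ᵥ x = 0 := by
    intro x hx
    apply (hH.dotProduct_mulVec_zero_iff x).mp
    rw [hstarv]
    have h1 := hup' x
    rw [hx, dotProduct_zero, mul_zero] at h1
    linarith [hHpsd x]
  have hPiM : Pi0 * M = 0 := by
    have h := congrArg Matrix.transpose hMPi
    rwa [Matrix.transpose_mul, hPs, hMs, Matrix.transpose_zero] at h
  have hHPi : H * Pi0 = 0 := by
    have key : ∀ j, H *ᵥ (fun k => Pi0 k j) = 0 := by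
      intro j
      apply hkerH
      have h2 : M *ᵥ (fun k => Pi0 k j) = fun i => (M * Pi0) i j := by
        funext i; simp [Matrix.mulVec, Matrix.mul_apply, dotProduct]
      rw [h2, hMPi]
      funext i; simp
    ext i j
    have := congrFun (key j) i
    simpa [Matrix.mulVec, Matrix.mul_apply, dotProduct] using this
  have hPiH : Pi0 * H = 0 := by
    have h := congrArg Matrix.transpose hHPi
    rwa [Matrix.transpose_mul, hPs, hHs, Matrix.transpose_zero] at h
  have hPiquad : ∀ x, x ⬝ᵥ Pi0 *ᵥ x = (Pi0 *ᵥ x) ⬝ᵥ (Pi0 *ᵥ x) := by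
    intro x
    conv_lhs => rw [← hPP]
    rw [← Matrix.mulVec_mulVec, dotProduct_mulVec, ← Matrix.mulVec_transpose, hPs]
  have hself : ∀ v : Fin d → ℝ, 0 ≤ v ⬝ᵥ v := fun v => Finset.sum_nonneg fun i _ => mul_self_nonneg _
  have hPig : Pi0 *ᵥ g = 0 := by rw [← hw, Matrix.mulVec_mulVec, hPiM, Matrix.zero_mulVec]
  -- the family of matrices
  set N : ℝ → Matrix (Fin d) (Fin d) ℝ := fun lam => H + lam • M with hN
  have hNs : ∀ lam, (N lam)ᵀ = N lam := by
    intro lam; rw [hN]; simp [Matrix.transpose_add, Matrix.transpose_smul, hMs, hHs]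
  have hsplit : ∀ lam (z y : Fin d → ℝ),
      z ⬝ᵥ (N lam) *ᵥ y = z ⬝ᵥ H *ᵥ y + lam * (z ⬝ᵥ M *ᵥ y) := by
    intro lam z y
    rw [hN]
    rw [Matrix.add_mulVec, dotProduct_add, Matrix.smul_mulVec, dotProduct_smul, smul_eq_mul]
  have hNpsd : ∀ lam, 0 ≤ lam → ∀ z, 0 ≤ z ⬝ᵥ (N lam) *ᵥ z := by
    intro lam hlam z
    rw [hsplit]
    have := hMpsd z; have := hHpsd z
    nlinarith
  have hNPi : ∀ lam, (N lam) * Pi0 = 0 := by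
    intro lam
    rw [hN]
    simp only [Matrix.add_mul, Matrix.smul_mul, hHPi, hMPi, smul_zero, add_zero]
  have hPiN : ∀ lam, Pi0 * (N lam) = 0 := by
    intro lam
    rw [hN]
    simp only [Matrix.mul_add, Matrix.mul_smul, hPiH, hPiM, smul_zero, add_zero]
  set K : ℝ → Matrix (Fin d) (Fin d) ℝ := fun lam => N lam + Pi0 with hK
  have hKpd : ∀ lam, 0 ≤ lam → (K lam).PosDef := by
    intro lam hlam
    refine Matrix.PosDef.of_dotProduct_mulVec_pos ?_ ?_
    · show (K lam)ᴴ = K lam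
      rw [Matrix.conjTranspose_eq_transpose_of_trivial, hK]
      simp [Matrix.transpose_add, hNs, hPs]
    · intro x hx
      rw [hstarv, hK]
      simp only []
      rw [Matrix.add_mulVec, dotProduct_add, hsplit]
      rcases eq_or_lt_of_le (hMpsd x) with hq | hq
      · have hMx : M *ᵥ x = 0 := hMzero x hq.symm
        have hPx : Pi0 *ᵥ x = x := hker x hMx
        have : x ⬝ᵥ Pi0 *ᵥ x = x ⬝ᵥ x := by rw [hPx]
        rw [this]
        have hxx : 0 < x ⬝ᵥ x := by
          rcases eq_or_lt_of_le (hself x) with h | h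
          · exact absurd (dotProduct_self_eq_zero.mp h.symm) hx
          · exact h
        nlinarith [hHpsd x, hMpsd x]
      · have h1 := hlow' x
        have h2 : 0 ≤ x ⬝ᵥ Pi0 *ᵥ x := by
          rw [hPiquad]; exact hself (Pi0 *ᵥ x)
        nlinarith
  have hNposM : ∀ lam, 0 ≤ lam → (N lam).PosSemidef := by
    intro lam hlam
    refine Matrix.PosSemidef.of_dotProduct_mulVec_nonneg ?_ (fun x => by rw [hstarv]; exact hNpsd lam hlam x)
    show (N lam)ᴴ = N lam
    rw [Matrix.conjTranspose_eq_transpose_of_trivial]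
    exact hNs lam
  have hKdet : ∀ lam, 0 ≤ lam → IsUnit (K lam).det := fun lam hlam =>
    (hKpd lam hlam).det_pos.ne'.isUnit
  set ψ : ℝ → Matrix (Fin d) (Fin d) ℝ := fun lam => ((K lam).det)⁻¹ • (K lam).adjugate with hψ
  have hψinv : ∀ lam, ψ lam = (K lam)⁻¹ := by
    intro lam
    rw [Matrix.inv_def, Ring.inverse_eq_inv]
  set xv : ℝ → (Fin d → ℝ) := fun lam => ψ lam *ᵥ g with hxv
  set φ : ℝ → ℝ := fun lam => xv lam ⬝ᵥ M *ᵥ xv lam with hφ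
  have hφnn : ∀ lam, 0 ≤ φ lam := fun lam => hMpsd _
  have hMPf : ∀ lam, 0 ≤ lam → (N lam * ψ lam = 1 - Pi0 ∧ Pi0 * ψ lam = Pi0 ∧
      IsMoorePenrose (N lam) (ψ lam - Pi0)) := by
    intro lam hlam
    have h := pinv_facts (N lam) Pi0 (hNs lam) hPs hPP (hNPi lam) (hKdet lam hlam)
    rw [hψinv lam]
    exact ⟨h.1, h.2.2.1, h.2.2.2.2⟩
  have hNxv : ∀ lam, 0 ≤ lam → N lam *ᵥ xv lam = g := by
    intro lam hlam
    show N lam *ᵥ (ψ lam *ᵥ g) = g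
    rw [Matrix.mulVec_mulVec, (hMPf lam hlam).1, Matrix.sub_mulVec, Matrix.one_mulVec, hPig,
      sub_zero]
  have hPixv : ∀ lam, 0 ≤ lam → Pi0 *ᵥ xv lam = 0 := by
    intro lam hlam
    show Pi0 *ᵥ (ψ lam *ᵥ g) = 0
    rw [Matrix.mulVec_mulVec, (hMPf lam hlam).2.1, hPig]
  -- continuity of φ on [0, ∞)
  have hKcont : Continuous K := by
    show Continuous fun lam : ℝ => (H + lam • M) + Pi0
    exact ((continuous_const.add (continuous_id.smul continuous_const)).add continuous_const)
  have hdetcont : ContinuousOn (fun lam => ((K lam).det)⁻¹) (Set.Ici (0:ℝ)) :=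
    (hKcont.matrix_det.continuousOn).inv₀ fun lam hlam => ((hKpd lam hlam).det_pos).ne'
  have hψcont : ContinuousOn ψ (Set.Ici (0:ℝ)) :=
    hdetcont.smul hKcont.matrix_adjugate.continuousOn
  have hxvcont : ContinuousOn xv (Set.Ici (0:ℝ)) :=
    (continuous_id.matrix_mulVec continuous_const).comp_continuousOn hψcont
  have hφcont : ContinuousOn φ (Set.Ici (0:ℝ)) :=
    (continuous_id.dotProduct (continuous_const.matrix_mulVec continuous_id)).comp_continuousOn
      hxvcont
  -- generic minimality
  have hQmin : ∀ lam, 0 ≤ lam → ∀ x, N lam *ᵥ x = g → lam * (x ⬝ᵥ M *ᵥ x - r^2) = 0 →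
      ∀ y, y ⬝ᵥ M *ᵥ y ≤ r^2 →
      -(g ⬝ᵥ x) + 1/2 * (x ⬝ᵥ H *ᵥ x) ≤ -(g ⬝ᵥ y) + 1/2 * (y ⬝ᵥ H *ᵥ y) := by
    intro lam hlam x hx hcomp y hy
    have hexp := quad_exp (N lam) (hNs lam) x y g hx
    have hge := hNpsd lam hlam (y - x)
    rw [hexp] at hge
    have hBy := hsplit lam y y
    have hCx : x ⬝ᵥ H *ᵥ x + lam * (x ⬝ᵥ M *ᵥ x) = g ⬝ᵥ x := by
      rw [← hsplit lam x x, hx, dotProduct_comm]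
    have hF : lam * (y ⬝ᵥ M *ᵥ y) ≤ lam * r^2 := mul_le_mul_of_nonneg_left hy hlam
    linarith
  -- uniqueness core
  have keyU : ∀ l1 l2 : ℝ, ∀ x1 x2 : Fin d → ℝ, 0 ≤ l1 → 0 < l2 → l1 ≠ l2 →
      N l1 *ᵥ x1 = g → N l2 *ᵥ x2 = g → Pi0 *ᵥ x1 = 0 → Pi0 *ᵥ x2 = 0 →
      x1 ⬝ᵥ M *ᵥ x1 ≤ r^2 → x2 ⬝ᵥ M *ᵥ x2 = r^2 →
      (-(g ⬝ᵥ x1) + 1/2 * (x1 ⬝ᵥ H *ᵥ x1) = -(g ⬝ᵥ x2) + 1/2 * (x2 ⬝ᵥ H *ᵥ x2)) → False := by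
    intro l1 l2 x1 x2 hl1 hl2 hne hx1 hx2 hp1 hp2 ha hb hQ
    have hexp := quad_exp (N l2) (hNs l2) x2 x1 g hx2
    have e1 := hsplit l2 x1 x1
    have e2 : x2 ⬝ᵥ H *ᵥ x2 + l2 * (x2 ⬝ᵥ M *ᵥ x2) = g ⬝ᵥ x2 := by
      rw [← hsplit l2 x2 x2, hx2, dotProduct_comm]
    rw [hb] at e2
    have hz1 : (x1 - x2) ⬝ᵥ N l2 *ᵥ (x1 - x2) = l2 * (x1 ⬝ᵥ M *ᵥ x1 - r^2) := by
      rw [hexp, e1]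
      linarith [hQ, e2]
    have hge := hNpsd l2 hl2.le (x1 - x2)
    have hz0 : (x1 - x2) ⬝ᵥ N l2 *ᵥ (x1 - x2) = 0 := by
      apply le_antisymm _ hge
      rw [hz1]
      have : x1 ⬝ᵥ M *ᵥ x1 - r^2 ≤ 0 := by linarith
      exact mul_nonpos_of_nonneg_of_nonpos hl2.le this
    have hMz : M *ᵥ (x1 - x2) = 0 := by
      apply hMzero
      have h1 := hsplit l2 (x1 - x2) (x1 - x2)
      rw [hz0] at h1
      have h2 := hHpsd (x1 - x2)
      have h3 := hMpsd (x1 - x2)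
      nlinarith
    have hx12 : x1 = x2 := by
      have hfix := hker _ hMz
      rw [Matrix.mulVec_sub, hp1, hp2, sub_zero] at hfix
      exact sub_eq_zero.mp hfix.symm
    have hMx2 : M *ᵥ x2 = 0 := by
      have h1 := hx1
      rw [hx12] at h1
      have h2 : N l1 *ᵥ x2 = N l2 *ᵥ x2 := h1.trans hx2.symm
      rw [hN] at h2
      simp only [Matrix.add_mulVec, Matrix.smul_mulVec] at h2
      have h3 := add_left_cancel h2
      have hsub : (l1 - l2) • (M *ᵥ x2) = 0 := by rw [sub_smul, h3, sub_self]
      rcases smul_eq_zero.mp hsub with h | h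
      · exact absurd (sub_eq_zero.mp h) hne
      · exact h
    rw [hMx2, dotProduct_zero] at hb
    nlinarith
  -- choose lam
  set c := w ⬝ᵥ M *ᵥ w with hc
  have hc0 : 0 ≤ c := hMpsd w
  have hkey : ∃ lam, 0 ≤ lam ∧ φ lam ≤ r^2 ∧ lam * (φ lam - r^2) = 0 ∧
      (0 < lam → φ lam = r^2) := by
    by_cases h0 : φ 0 ≤ r^2
    · exact ⟨0, le_refl 0, h0, by ring, fun h => absurd h (lt_irrefl 0)⟩
    · push_neg at h0
      set lam1 : ℝ := Real.sqrt c / r + 1 with hlam1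
      have hlam1pos : 0 < lam1 := by positivity
      have hφ1 : φ lam1 ≤ r^2 := by
        have hx1 := hNxv lam1 hlam1pos.le
        have e1 : xv lam1 ⬝ᵥ N lam1 *ᵥ xv lam1 = g ⬝ᵥ xv lam1 := by
          rw [hx1, dotProduct_comm]
        have e2 := hsplit lam1 (xv lam1) (xv lam1)
        have e3 : g ⬝ᵥ xv lam1 = xv lam1 ⬝ᵥ M *ᵥ w := by
          rw [← hw, dotProduct_comm, dot_symm M hMs]
        have e4 := cs_ineq hM (xv lam1) w
        have hs : Real.sqrt (φ lam1) ^ 2 = φ lam1 := Real.sq_sqrt (hφnn lam1)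
        have ht : Real.sqrt c ^ 2 = c := Real.sq_sqrt hc0
        have hsn := Real.sqrt_nonneg (φ lam1)
        have htn := Real.sqrt_nonneg c
        have e5 : xv lam1 ⬝ᵥ M *ᵥ w ≤ Real.sqrt (φ lam1) * Real.sqrt c := by
          nlinarith [e4, hs, ht, hsn, htn, mul_nonneg hsn htn,
            sq_nonneg (xv lam1 ⬝ᵥ M *ᵥ w - Real.sqrt (φ lam1) * Real.sqrt c),
            sq_nonneg (xv lam1 ⬝ᵥ M *ᵥ w + Real.sqrt (φ lam1) * Real.sqrt c)]
        have e6 : lam1 * φ lam1 ≤ Real.sqrt (φ lam1) * Real.sqrt c := by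
          have h7 := hHpsd (xv lam1)
          have h8 : φ lam1 = xv lam1 ⬝ᵥ M *ᵥ xv lam1 := rfl
          linarith [e1, e2, e3, e5, h7]
        have hsr : Real.sqrt (φ lam1) ≤ r := by
          by_contra hcon
          push_neg at hcon
          have hsp : 0 < Real.sqrt (φ lam1) := hr.trans hcon
          have e6' : lam1 * Real.sqrt (φ lam1)^2 ≤ Real.sqrt (φ lam1) * Real.sqrt c := by
            rw [hs]; exact e6
          have hlr : lam1 * r = Real.sqrt c + r := by
            rw [hlam1]; field_simp
          have h10 : r * (lam1 * Real.sqrt (φ lam1)^2)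
              ≤ r * (Real.sqrt (φ lam1) * Real.sqrt c) := mul_le_mul_of_nonneg_left e6' hr.le
          have h11 : (Real.sqrt c + r) * Real.sqrt (φ lam1)^2
              ≤ r * (Real.sqrt (φ lam1) * Real.sqrt c) := by
            calc (Real.sqrt c + r) * Real.sqrt (φ lam1)^2
                = r * (lam1 * Real.sqrt (φ lam1)^2) := by rw [← hlr]; ring
              _ ≤ r * (Real.sqrt (φ lam1) * Real.sqrt c) := h10
          nlinarith [h11, mul_nonneg (mul_nonneg htn hsp.le) (sub_nonneg.mpr hcon.le),
            mul_pos hr (mul_pos hsp hsp)]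
        nlinarith [hsr, hs, hsn]
      have hIVT := intermediate_value_Icc' hlam1pos.le
        (hφcont.mono (fun z hz => hz.1))
      have hmem : r^2 ∈ Set.Icc (φ lam1) (φ 0) := ⟨hφ1, h0.le⟩
      obtain ⟨lam, hlamIcc, hφeq⟩ := hIVT hmem
      exact ⟨lam, hlamIcc.1, le_of_eq hφeq, by rw [hφeq]; ring, fun _ => hφeq⟩
  obtain ⟨lam, hlam0, hφle, hcomp, hbd⟩ := hkey
  have hMPlam := hMPf lam hlam0
  have hPg : (ψ lam - Pi0) *ᵥ g = xv lam := by
    rw [Matrix.sub_mulVec, hPig, sub_zero]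
  refine ⟨lam, ψ lam - Pi0, hlam0, hMPlam.2.2, ⟨?_, ?_⟩, ?_, ?_⟩
  · rw [hPg]
    exact (sqrt_le_iff'' (hφnn lam) hr.le).mpr hφle
  · intro y hy
    rw [hPg]
    exact hQmin lam hlam0 (xv lam) (hNxv lam hlam0) hcomp y
      ((sqrt_le_iff'' (hMpsd y) hr.le).mp hy)
  · intro hpos
    rw [hPg]
    exact (sqrt_eq_iff'' (hφnn lam) hr.le).mpr (hbd hpos)
  · intro lam' P' hlam' hMP' hmin' hbd'
    set x' := P' *ᵥ g with hx'def
    have hN'x' : N lam' *ᵥ x' = g := by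
      have hz := hNxv lam' hlam'
      calc N lam' *ᵥ (P' *ᵥ g)
          = N lam' *ᵥ (P' *ᵥ (N lam' *ᵥ xv lam')) := by rw [hz]
        _ = (N lam' * P' * N lam') *ᵥ xv lam' := by
            rw [Matrix.mulVec_mulVec, Matrix.mulVec_mulVec]
        _ = N lam' *ᵥ xv lam' := by rw [hMP'.1]
        _ = g := hz
    have hPiP' : Pi0 * P' = 0 := by
      have h4 := hMP'.2.2.2
      have h2 := hMP'.2.1
      calc Pi0 * P' = Pi0 * (P' * N lam' * P') := by rw [h2]
        _ = Pi0 * ((P' * N lam')ᵀ * P') := by rw [h4]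
        _ = Pi0 * ((N lam')ᵀ * P'ᵀ * P') := by rw [Matrix.transpose_mul]
        _ = Pi0 * N lam' * P'ᵀ * P' := by rw [hNs lam']; simp only [Matrix.mul_assoc]
        _ = 0 := by rw [hPiN lam', Matrix.zero_mul, Matrix.zero_mul]
    have hPix' : Pi0 *ᵥ x' = 0 := by
      rw [hx'def, Matrix.mulVec_mulVec, hPiP', Matrix.zero_mulVec]
    have hb' : x' ⬝ᵥ M *ᵥ x' ≤ r^2 := (sqrt_le_iff'' (hMpsd x') hr.le).mp hmin'.1
    have hQeq : -(g ⬝ᵥ xv lam) + 1/2 * (xv lam ⬝ᵥ H *ᵥ xv lam)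
        = -(g ⬝ᵥ x') + 1/2 * (x' ⬝ᵥ H *ᵥ x') := by
      apply le_antisymm
      · exact hQmin lam hlam0 (xv lam) (hNxv lam hlam0) hcomp x' hb'
      · have := hmin'.2 (xv lam) ((sqrt_le_iff'' (hφnn lam) hr.le).mpr hφle)
        exact this
    rcases eq_or_ne lam' lam with heq | hne
    · exact heq
    rcases lt_or_eq_of_le hlam' with hpos' | hzero'
    · exact absurd hQeq (by
        intro hQ
        exact keyU lam lam' (xv lam) x' hlam0 hpos' hne.symm
          (hNxv lam hlam0) hN'x' (hPixv lam hlam0) hPix' hφle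
          ((sqrt_eq_iff'' (hMpsd x') hr.le).mp (hbd' hpos')) hQ)
    · -- lam' = 0, so lam ≠ 0, lam > 0
      have hlampos : 0 < lam := by
        rcases lt_or_eq_of_le hlam0 with h | h
        · exact h
        · exact absurd (hzero'.symm.trans h) hne
      exact absurd hQeq.symm (by
        intro hQ
        exact keyU lam' lam x' (xv lam) hlam' hlampos hne
          hN'x' (hNxv lam hlam0) hPix' (hPixv lam hlam0) hb' (hbd hlampos) hQ)
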